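/- Let n, q, r be integers with n/2 < r < q ≤ n, and let X be a binomial random variable with parameters n and 1/2. Then P(X ≥ q | X ≥ r) > (1/n)·((n−q)/r)^{q−r}. Equivalently, (∑_{i=q}^{n} C(n,i)) / (∑_{i=r}^{n} C(n,i)) > (1/n)·((n−q)/r)^{q−r}. -/

import Mathlib

open Finset

lemma pairwise_ineq (r c s t : ℝ) (hc : 0 ≤ c) (hrc : c < r) (hs : 1 ≤ s) (ht : 1 ≤ t) :
    c^2 * ((r+t)*(r+s)) < r^2 * ((c+s)*(c+t)) := by
  have h1 : (0:ℝ) ≤ (r - c) * (c * r * (s + t)) :=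
    mul_nonneg (sub_nonneg.2 hrc.le) (mul_nonneg (mul_nonneg hc (hc.trans hrc.le)) (by linarith))
  have h2 : (0:ℝ) < (r - c) * (s * t * (r + c)) :=
    mul_pos (sub_pos.2 hrc) (mul_pos (mul_pos (by linarith) (by linarith)) (by linarith [hc.trans_lt hrc]))
  nlinarith [h1, h2]

lemma choose_prod (n r q : ℕ) (hrq : r ≤ q) (hq : q ≤ n) :
    n.choose q * ∏ i ∈ Ico r q, (i+1) = n.choose r * ∏ i ∈ Ico r q, (n - i) := by
  induction q with
  | zero => interval_cases r; simp
  | succ q ih =>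
    rcases Nat.eq_or_lt_of_le hrq with h | h
    · rw [← h]; simp
    · have hrq' : r ≤ q := Nat.lt_succ_iff.mp h
      have hq' : q ≤ n := le_trans (Nat.le_succ q) hq
      have key : n.choose (q+1) * (q+1) = n.choose q * (n - q) := Nat.choose_succ_right_eq n q
      rw [Finset.prod_Ico_succ_top hrq', Finset.prod_Ico_succ_top hrq']
      calc n.choose (q+1) * ((∏ i ∈ Ico r q, (i+1)) * (q+1))
          = (n.choose (q+1) * (q+1)) * ∏ i ∈ Ico r q, (i+1) := by ring
        _ = (n.choose q * ∏ i ∈ Ico r q, (i+1)) * (n - q) := by rw [key]; ring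
        _ = (n.choose r * ∏ i ∈ Ico r q, (n-i)) * (n - q) := by rw [ih hrq' hq']
        _ = n.choose r * ((∏ i ∈ Ico r q, (n-i)) * (n - q)) := by ring

lemma choose_anti (n r : ℕ) (hr : n < 2*r) : ∀ i, r ≤ i → n.choose i ≤ n.choose r := by
  intro i hi
  induction i with
  | zero => simp at hi ⊢; omega
  | succ i ih =>
    rcases Nat.eq_or_lt_of_le hi with h | h
    · rw [← h]
    · have hri : r ≤ i := Nat.lt_succ_iff.mp h
      refine le_trans ?_ (ih hri)
      have key : n.choose (i+1) * (i+1) = n.choose i * (n - i) := Nat.choose_succ_right_eq n i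
      have h2 : n - i ≤ i + 1 := by omega
      have := Nat.mul_le_mul_left (n.choose i) h2
      have h3 : n.choose (i+1) * (i+1) ≤ n.choose i * (i+1) := by omega
      exact Nat.le_of_mul_le_mul_right h3 (Nat.succ_pos i)

lemma prod_key (n r q : ℕ) (hr : n < 2*r) (hrq : r < q) (hq : q ≤ n) :
    ((n:ℝ) - q)^(q-r) * ∏ i ∈ Ico r q, ((i:ℝ)+1)
      < (r:ℝ)^(q-r) * ∏ i ∈ Ico r q, ((n:ℝ) - i) := by
  have hk1 : 1 ≤ q - r := by omega
  have hr1 : 1 ≤ r := by omega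
  have hXpos : 0 < ∏ i ∈ Ico r q, ((n:ℝ) - i) := by
    apply Finset.prod_pos
    intro i hi
    have h2 : i < q := (Finset.mem_Ico.mp hi).2
    have : (i:ℝ) < n := by
      have : i < n := lt_of_lt_of_le h2 hq
      exact_mod_cast this
    linarith
  rcases eq_or_lt_of_le hq with hqn | hqn
  · subst hqn
    rw [sub_self, zero_pow (by omega), zero_mul]
    positivity
  -- now q < n, so c := n - q > 0
  set k := q - r with hk
  have hqrk : q = r + k := by omega
  have hX : ∏ i ∈ Ico r q, ((n:ℝ) - i) = ∏ j ∈ range k, ((n:ℝ) - ((r:ℝ)+j)) := by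
    rw [Finset.prod_Ico_eq_prod_range]
    apply Finset.prod_congr rfl
    intro j hj; push_cast; ring
  have hY : ∏ i ∈ Ico r q, ((i:ℝ)+1) = ∏ j ∈ range k, ((r:ℝ)+j+1) := by
    rw [Finset.prod_Ico_eq_prod_range]
    apply Finset.prod_congr rfl
    intro j hj; push_cast; ring
  rw [hX, hY]
  set P : ℝ := ∏ j ∈ range k, (r:ℝ) * ((n:ℝ) - ((r:ℝ)+j)) with hP
  set Q : ℝ := ∏ j ∈ range k, ((n:ℝ) - q) * ((r:ℝ)+j+1) with hQ
  have hc0 : (0:ℝ) < (n:ℝ) - q := by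
    have : (q:ℝ) < n := by exact_mod_cast hqn
    linarith
  have hcr : (n:ℝ) - q < r := by
    have h1 : (n:ℝ) < 2*r := by exact_mod_cast hr
    have h2 : (r:ℝ) < q := by exact_mod_cast hrq
    linarith
  have hQ0 : 0 ≤ Q := by
    apply Finset.prod_nonneg
    intro j hj
    have h1 : (0:ℝ) ≤ (r:ℝ)+j+1 := by positivity
    exact mul_nonneg hc0.le h1
  have e1 : P * P = ∏ j ∈ range k,
      (((r:ℝ) * ((n:ℝ) - ((r:ℝ)+j))) * ((r:ℝ) * ((n:ℝ) - ((r:ℝ) + ((k-1-j : ℕ):ℝ))))) := by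
    rw [Finset.prod_mul_distrib,
      Finset.prod_range_reflect (fun j => (r:ℝ) * ((n:ℝ) - ((r:ℝ)+(j:ℝ)))) k]
  have e2 : Q * Q = ∏ j ∈ range k,
      ((((n:ℝ) - q) * ((r:ℝ)+j+1)) * (((n:ℝ) - q) * ((r:ℝ) + ((k-1-j : ℕ):ℝ) + 1))) := by
    rw [Finset.prod_mul_distrib,
      Finset.prod_range_reflect (fun j => ((n:ℝ) - q) * ((r:ℝ)+(j:ℝ)+1)) k]
  have hsq : Q * Q < P * P := by
    rw [e1, e2]
    apply Finset.prod_lt_prod_of_nonempty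
    · intro j hj
      have hjk : j < k := Finset.mem_range.mp hj
      have h1 : (0:ℝ) < (r:ℝ)+j+1 := by positivity
      have h2 : (0:ℝ) < (r:ℝ) + ((k-1-j : ℕ):ℝ) + 1 := by positivity
      have := mul_pos (mul_pos hc0 h1) (mul_pos hc0 h2)
      nlinarith [this]
    · intro j hj
      have hjk : j < k := Finset.mem_range.mp hj
      have hcast : ((k-1-j:ℕ):ℝ) = (k:ℝ)-1-j := by
        have h' : k-1-j = k-(1+j) := by omega
        rw [h', Nat.cast_sub (by omega)]
        push_cast; ring
      rw [hcast]
      have hs : (1:ℝ) ≤ (k:ℝ) - j := by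
        have : (j:ℝ)+1 ≤ k := by exact_mod_cast (by omega : j+1 ≤ k)
        linarith
      have ht : (1:ℝ) ≤ (j:ℝ) + 1 := by linarith [show (0:ℝ) ≤ j from Nat.cast_nonneg j]
      have key := pairwise_ineq (r:ℝ) ((n:ℝ)-q) ((k:ℝ)-j) ((j:ℝ)+1) hc0.le hcr hs ht
      have hqc : (q:ℝ) = (r:ℝ) + k := by exact_mod_cast hqrk
      rw [hqc] at key ⊢
      nlinarith [key]
    · exact Finset.nonempty_range_iff.mpr (by omega)
  have hPpos : 0 < P := by
    rw [hX] at hXpos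
    exact mul_pos (by positivity : (0:ℝ) < ∏ _j ∈ range k, (r:ℝ)) hXpos |>.trans_eq
      (Finset.prod_mul_distrib).symm
  have hPQ : Q < P := by nlinarith [hsq, hQ0]
  calc ((n:ℝ) - q)^k * ∏ j ∈ range k, ((r:ℝ)+j+1)
      = Q := by rw [hQ, Finset.prod_mul_distrib, Finset.prod_const, Finset.card_range]
    _ < P := hPQ
    _ = (r:ℝ)^k * ∏ j ∈ range k, ((n:ℝ) - ((r:ℝ)+j)) := by
        rw [hP, Finset.prod_mul_distrib, Finset.prod_const, Finset.card_range]

/-- For X ~ B(n,1/2) and integers n/2 < r < q ≤ n,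
    P(X ≥ q | X ≥ r) = (∑_{i=q}^n C(n,i)) / (∑_{i=r}^n C(n,i)) > (1/n)·((n−q)/r)^{q−r}. -/
theorem stmt2 (n q r : ℕ) (hr : n < 2*r) (hrq : r < q) (hq : q ≤ n) :
    (∑ i ∈ Finset.Icc q n, (n.choose i : ℝ)) / (∑ i ∈ Finset.Icc r n, (n.choose i : ℝ))
      > (1 / n) * (((n : ℝ) - q) / r) ^ (q - r) := by
  have hr1 : 1 ≤ r := by omega
  have hn0 : 0 < n := by omega
  have hrn : r ≤ n := by omega
  set k := q - r with hk
  have hCq : 0 < n.choose q := Nat.choose_pos hq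
  have hCr : 0 < n.choose r := Nat.choose_pos hrn
  have hCqR : (0:ℝ) < n.choose q := by exact_mod_cast hCq
  have hCrR : (0:ℝ) < n.choose r := by exact_mod_cast hCr
  have hc0 : (0:ℝ) ≤ (n:ℝ) - q := by
    have : (q:ℝ) ≤ n := by exact_mod_cast hq
    linarith
  have hXc : ((∏ i ∈ Ico r q, (n - i) : ℕ) : ℝ) = ∏ i ∈ Ico r q, ((n:ℝ) - i) := by
    push_cast
    apply Finset.prod_congr rfl
    intro i hi
    have hin : i ≤ n := le_trans (le_of_lt (Finset.mem_Ico.mp hi).2) hq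
    rw [Nat.cast_sub hin]
  have hYc : ((∏ i ∈ Ico r q, (i+1) : ℕ) : ℝ) = ∏ i ∈ Ico r q, ((i:ℝ)+1) := by
    push_cast; rfl
  have hid : (n.choose q : ℝ) * ∏ i ∈ Ico r q, ((i:ℝ)+1)
      = (n.choose r : ℝ) * ∏ i ∈ Ico r q, ((n:ℝ) - i) := by
    rw [← hXc, ← hYc]
    exact_mod_cast choose_prod n r q hrq.le hq
  have hX0 : 0 < ∏ i ∈ Ico r q, ((n:ℝ) - i) := by
    apply Finset.prod_pos
    intro i hi
    have h2 : i < q := (Finset.mem_Ico.mp hi).2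
    have : (i:ℝ) < n := by exact_mod_cast lt_of_lt_of_le h2 hq
    linarith
  have hkey : ((n:ℝ)-q)^k * (n.choose r) < (r:ℝ)^k * (n.choose q) := by
    have h1 := prod_key n r q hr hrq hq
    have h2 := mul_lt_mul_of_pos_left h1 hCqR
    have h3 : (((n:ℝ)-q)^k * (n.choose r)) * (∏ i ∈ Ico r q, ((n:ℝ) - i))
        < ((r:ℝ)^k * (n.choose q)) * (∏ i ∈ Ico r q, ((n:ℝ) - i)) := by
      calc (((n:ℝ)-q)^k * (n.choose r)) * (∏ i ∈ Ico r q, ((n:ℝ) - i))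
          = (n.choose q : ℝ) * (((n:ℝ)-q)^k * ∏ i ∈ Ico r q, ((i:ℝ)+1)) := by
            rw [show (((n:ℝ)-q)^k * (n.choose r)) * (∏ i ∈ Ico r q, ((n:ℝ) - i))
              = ((n:ℝ)-q)^k * ((n.choose r : ℝ) * ∏ i ∈ Ico r q, ((n:ℝ) - i)) by ring, ← hid]
            ring
        _ < (n.choose q : ℝ) * ((r:ℝ)^k * ∏ i ∈ Ico r q, ((n:ℝ) - i)) := h2
        _ = ((r:ℝ)^k * (n.choose q)) * (∏ i ∈ Ico r q, ((n:ℝ) - i)) := by ring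
    exact lt_of_mul_lt_mul_right h3 hX0.le
  have hSq : (n.choose q : ℝ) ≤ ∑ i ∈ Icc q n, (n.choose i:ℝ) :=
    Finset.single_le_sum (f := fun i => (n.choose i : ℝ)) (fun i _ => by positivity) (Finset.mem_Icc.mpr ⟨le_refl q, hq⟩)
  have hSr1 : (n.choose r : ℝ) ≤ ∑ i ∈ Icc r n, (n.choose i:ℝ) :=
    Finset.single_le_sum (f := fun i => (n.choose i : ℝ)) (fun i _ => by positivity) (Finset.mem_Icc.mpr ⟨le_refl r, hrn⟩)
  have hSrpos : 0 < ∑ i ∈ Icc r n, (n.choose i:ℝ) := lt_of_lt_of_le hCrR hSr1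
  have hSrub : ∑ i ∈ Icc r n, (n.choose i:ℝ) ≤ (n:ℝ) * n.choose r := by
    calc ∑ i ∈ Icc r n, (n.choose i:ℝ) ≤ ∑ _i ∈ Icc r n, (n.choose r:ℝ) := by
          apply Finset.sum_le_sum
          intro i hi
          exact_mod_cast choose_anti n r hr i (Finset.mem_Icc.mp hi).1
      _ = ((n+1-r : ℕ):ℝ) * (n.choose r:ℝ) := by
          rw [Finset.sum_const, Nat.card_Icc, nsmul_eq_mul]
      _ ≤ (n:ℝ) * n.choose r := by
          apply mul_le_mul_of_nonneg_right _ hCrR.le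
          exact_mod_cast (by omega : n+1-r ≤ n)
  rw [gt_iff_lt, show (1/(n:ℝ)) * (((n:ℝ) - q)/r)^k = ((n:ℝ)-q)^k / ((n:ℝ) * (r:ℝ)^k) by
    rw [div_pow]; ring]
  rw [div_lt_div_iff₀ (by positivity) hSrpos]
  calc ((n:ℝ)-q)^k * ∑ i ∈ Icc r n, (n.choose i:ℝ)
      ≤ ((n:ℝ)-q)^k * ((n:ℝ) * n.choose r) :=
        mul_le_mul_of_nonneg_left hSrub (pow_nonneg hc0 k)
    _ = (n:ℝ) * (((n:ℝ)-q)^k * n.choose r) := by ring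
    _ < (n:ℝ) * ((r:ℝ)^k * n.choose q) := by
        apply mul_lt_mul_of_pos_left hkey
        exact_mod_cast hn0
    _ = (n.choose q : ℝ) * ((n:ℝ) * (r:ℝ)^k) := by ring
    _ ≤ (∑ i ∈ Icc q n, (n.choose i:ℝ)) * ((n:ℝ) * (r:ℝ)^k) :=
        mul_le_mul_of_nonneg_right hSq (by positivity)
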